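/- Let d ∈ {2,3}. Let (h_n) ⊂ (0,1) with h_n → 0⁺, write ℓ_n := ℓ(h_n), and let (β_n) = ((β_{n,+}, β_{n,−}))_n be a bounded sequence in ℂ². Then there exists C > 1 such that for every integer Υ ≥ 1 and every n with h_n^{−1} ≥ Υ, the tail sum Σ over integers k with k ≥ −ℓ_n and |k| ≥ Υ+1 of |β_{n,+} + (−1)^{ℓ_n+k} β_{n,−}|² · m_{ℓ_n+k}/(λ_{ℓ_n+k}² − h_n^{−2})² is at most C h_n^{3−d}/Υ. -/

import Mathlib

open Filter

/-- Auxiliary telescoping majorant. -/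
noncomputable def GGaux (Y i : ℕ) : ℝ := ((max (i - 1) Y : ℕ) : ℝ)⁻¹

/-- Auxiliary comparison sequence. -/
noncomputable def uuaux (Y j : ℕ) : ℝ := if Y + 1 ≤ j then ((j:ℝ) - 1)⁻¹ - (j:ℝ)⁻¹ else 0

lemma GGaux_nonneg (Y i : ℕ) : 0 ≤ GGaux Y i := inv_nonneg.2 (Nat.cast_nonneg _)

lemma GGaux_le (Y i : ℕ) (hY : 1 ≤ Y) : GGaux Y i ≤ (Y:ℝ)⁻¹ := by
  unfold GGaux
  have h1 : (0:ℝ) < Y := by exact_mod_cast hY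
  have h2 : (Y:ℝ) ≤ ((max (i - 1) Y : ℕ) : ℝ) := by exact_mod_cast le_max_right (i-1) Y
  exact inv_anti₀ h1 h2

lemma uuaux_eq (Y : ℕ) (hY : 1 ≤ Y) (i : ℕ) : uuaux Y i = GGaux Y i - GGaux Y (i+1) := by
  unfold uuaux GGaux
  by_cases h : Y + 1 ≤ i
  · have h1 : 1 ≤ i := by omega
    have e1 : max (i - 1) Y = i - 1 := max_eq_left (by omega)
    have e2 : max (i + 1 - 1) Y = i := by omega
    rw [if_pos h, e1, e2, Nat.cast_sub h1]
    norm_num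
  · have e1 : max (i - 1) Y = Y := max_eq_right (by omega)
    have e2 : max (i + 1 - 1) Y = Y := max_eq_right (by omega)
    rw [if_neg h, e1, e2, sub_self]

lemma uuaux_nonneg (Y : ℕ) (hY : 1 ≤ Y) (j : ℕ) : 0 ≤ uuaux Y j := by
  unfold uuaux
  by_cases h : Y + 1 ≤ j
  · rw [if_pos h]
    have h2 : (2:ℝ) ≤ (j:ℝ) := by exact_mod_cast (by omega : 2 ≤ j)
    have h1 : (0:ℝ) < (j:ℝ) - 1 := by linarith
    have := inv_anti₀ h1 (by linarith : (j:ℝ) - 1 ≤ (j:ℝ))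
    linarith
  · rw [if_neg h]

lemma uuaux_sum_le (Y : ℕ) (hY : 1 ≤ Y) (c : ℕ) (N : ℕ) :
    ∑ i ∈ Finset.range N, uuaux Y (i + c) ≤ (Y:ℝ)⁻¹ := by
  have e : ∀ i : ℕ, uuaux Y (i + c) = GGaux Y (i + c) - GGaux Y ((i+1) + c) := by
    intro i
    rw [uuaux_eq Y hY]
    congr 2
    omega
  calc ∑ i ∈ Finset.range N, uuaux Y (i + c)
      = ∑ i ∈ Finset.range N,
          ((fun j => GGaux Y (j + c)) i - (fun j => GGaux Y (j + c)) (i+1)) := by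
        exact Finset.sum_congr rfl fun i _ => e i
    _ = GGaux Y (0 + c) - GGaux Y (N + c) := Finset.sum_range_sub' (fun j => GGaux Y (j + c)) N
    _ ≤ GGaux Y (0 + c) := by linarith [GGaux_nonneg Y (N + c)]
    _ ≤ (Y:ℝ)⁻¹ := GGaux_le Y _ hY

lemma uuaux_summable (Y : ℕ) (hY : 1 ≤ Y) (c : ℕ) :
    Summable (fun i => uuaux Y (i + c)) :=
  summable_of_sum_range_le (fun _ => uuaux_nonneg Y hY _) (uuaux_sum_le Y hY c)

lemma uuaux_tsum_le (Y : ℕ) (hY : 1 ≤ Y) (c : ℕ) :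
    ∑' i, uuaux Y (i + c) ≤ (Y:ℝ)⁻¹ :=
  Real.tsum_le_of_sum_range_le (fun _ => uuaux_nonneg Y hY _) (uuaux_sum_le Y hY c)

/-- The squared Laplace eigenvalue `λ_ℓ² = ℓ(ℓ+d−1)` on `S^d`, extended to integer index. -/
noncomputable def lam2 (d : ℕ) (l : ℤ) : ℝ := (l : ℝ) * ((l : ℝ) + (d : ℝ) - 1)

/-- The multiplicity `m_ℓ` (`2ℓ+1` if `d = 2`, `(ℓ+1)²` if `d = 3`), extended to integer
index. -/
noncomputable def mult (d : ℕ) (l : ℤ) : ℝ :=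
  if d = 2 then 2 * (l : ℝ) + 1 else ((l : ℝ) + 1) ^ 2

lemma mult_nonneg' (d : ℕ) (l : ℤ) (hl : 0 ≤ l) : 0 ≤ mult d l := by
  have h : (0:ℝ) ≤ (l:ℝ) := by exact_mod_cast hl
  unfold mult
  split
  · linarith
  · positivity

set_option maxHeartbeats 1000000 in
lemma key_term (d : ℕ) (hd : d = 2 ∨ d = 3) (H : ℝ) (hH0 : 0 < H)
    (Lr σ : ℝ) (hLr : 0 ≤ Lr) (hσ0 : 0 ≤ σ) (hσ1 : σ < 1)
    (hmu : H ^ (-2:ℤ) = (Lr + σ) * (Lr + σ + (d:ℝ) - 1))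
    (b : ℝ) (hb : 0 ≤ b) (l k : ℤ) (hlk : (l:ℝ) = Lr + (k:ℝ)) (hl : 0 ≤ l)
    (jr : ℝ) (hjr : jr = |(k:ℝ)|) (hjr2 : 2 ≤ jr) :
    b * mult d l / (lam2 d l - H ^ (-2:ℤ)) ^ 2
      ≤ 4 * b * H ^ ((3:ℤ) - (d:ℤ)) * ((jr - 1)⁻¹ - jr⁻¹) := by
  obtain ⟨I, hIdef⟩ : ∃ x : ℝ, x = H⁻¹ := ⟨_, rfl⟩
  obtain ⟨a, hadef⟩ : ∃ x : ℝ, x = Lr + σ := ⟨_, rfl⟩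
  obtain ⟨lr, hlrdef⟩ : ∃ x : ℝ, x = (l:ℝ) := ⟨_, rfl⟩
  obtain ⟨kr, hkrdef⟩ : ∃ x : ℝ, x = (k:ℝ) := ⟨_, rfl⟩
  obtain ⟨D, hDdef⟩ : ∃ x : ℝ, x = lr + a + (d:ℝ) - 1 := ⟨_, rfl⟩
  obtain ⟨E, hEdef⟩ : ∃ x : ℝ, x = kr - σ := ⟨_, rfl⟩
  obtain ⟨Hp, hHpdef⟩ : ∃ x : ℝ, x = H ^ ((3:ℤ) - (d:ℤ)) := ⟨_, rfl⟩
  have hI0 : 0 < I := hIdef ▸ inv_pos.2 hH0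
  have hI2 : I ^ 2 = a * (a + (d:ℝ) - 1) := by
    rw [hIdef, hadef, ← hmu, inv_pow, ← zpow_natCast, ← zpow_neg]; norm_num
  have hd2 : (2:ℝ) ≤ (d:ℝ) := by rcases hd with rfl | rfl <;> norm_num
  have ha0 : 0 ≤ a := by rw [hadef]; positivity
  have hID : I ≤ a + (d:ℝ) - 1 := by nlinarith [sq_nonneg (I - (a + (d:ℝ) - 1))]
  have hlr0 : (0:ℝ) ≤ lr := by rw [hlrdef]; exact_mod_cast hl
  have hDI : I ≤ D := by rw [hDdef]; linarith
  have hD0 : 0 < D := lt_of_lt_of_le hI0 hDI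
  have hE2 : (jr - 1) ^ 2 ≤ E ^ 2 := by
    rw [hEdef, hkrdef]
    rcases abs_cases ((k:ℝ)) with ⟨h1, _⟩ | ⟨h1, _⟩
    · rw [hjr, h1]; nlinarith
    · rw [hjr, h1]; nlinarith
  have hjr1 : (0:ℝ) < jr - 1 := by linarith
  have hE2pos : 0 < E ^ 2 := lt_of_lt_of_le (by nlinarith) hE2
  have hden : lam2 d l - H ^ (-2:ℤ) = E * D := by
    rw [hmu]; unfold lam2
    rw [hlk, hEdef, hDdef, hlrdef, hlk, hkrdef, hadef]
    ring
  have hHp0 : 0 < Hp := hHpdef ▸ zpow_pos hH0 _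
  have hHD : 1 ≤ H * D := by
    have h2 : H * I ≤ H * D := mul_le_mul_of_nonneg_left hDI hH0.le
    rw [hIdef, mul_inv_cancel₀ hH0.ne'] at h2
    exact h2
  have hmult0 : 0 ≤ mult d l := by
    rcases hd with rfl | rfl
    · have e : mult 2 l = 2 * lr + 1 := by rw [mult, if_pos rfl, hlrdef]
      rw [e]; linarith
    · have e : mult 3 l = (lr + 1) ^ 2 := by rw [mult, hlrdef]; norm_num
      rw [e]; positivity
  have hmult : mult d l ≤ 2 * Hp * D ^ 2 := by
    rcases hd with rfl | rfl
    · have hHp : Hp = H := by rw [hHpdef]; norm_num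
      have e : mult 2 l = 2 * lr + 1 := by rw [mult, if_pos rfl, hlrdef]
      have hDd : D = lr + a + 1 := by rw [hDdef]; push_cast; ring
      rw [e, hHp]
      nlinarith [mul_nonneg (sub_nonneg.2 hHD) hD0.le]
    · have hHp : Hp = 1 := by rw [hHpdef]; norm_num
      have e : mult 3 l = (lr + 1) ^ 2 := by rw [mult, hlrdef]; norm_num
      have hDd : D = lr + a + 2 := by rw [hDdef]; push_cast; ring
      rw [e, hHp]
      nlinarith
  rw [hden, ← hHpdef]
  have h1 : b * mult d l / (E * D) ^ 2 ≤ (2 * b * Hp) / E ^ 2 := by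
    rw [mul_pow]
    calc b * mult d l / (E ^ 2 * D ^ 2)
        ≤ (2 * b * Hp) * D ^ 2 / (E ^ 2 * D ^ 2) := by
          apply div_le_div_of_nonneg_right ?_ (by positivity)
          · nlinarith
      _ = (2 * b * Hp) / E ^ 2 := by
          have hD2 : (D:ℝ) ^ 2 ≠ 0 := by positivity
          have hE2' : (E:ℝ) ^ 2 ≠ 0 := hE2pos.ne'
          field_simp
  have h2 : (2 * b * Hp) / E ^ 2 ≤ (2 * b * Hp) / (jr - 1) ^ 2 := by
    gcongr <;> positivity
  have h3 : (2 * b * Hp) / (jr - 1) ^ 2 ≤ 4 * b * Hp * ((jr - 1)⁻¹ - jr⁻¹) := by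
    have hjr0 : (0:ℝ) < jr := by linarith
    have e : (jr - 1)⁻¹ - jr⁻¹ = 1 / ((jr - 1) * jr) := by
      field_simp
      ring
    rw [e, mul_one_div, div_le_div_iff₀ (by positivity) (by positivity)]
    nlinarith [mul_nonneg (mul_nonneg hb hHp0.le)
      (mul_nonneg hjr1.le (by linarith : (0:ℝ) ≤ jr - 2))]
  linarith

set_option maxHeartbeats 1000000 in
/-- Tail estimate: for a bounded sequence `β_n ∈ ℂ²` and `h_n → 0⁺`,
there is `C > 1` such that for all `Υ ≥ 1` and all `n` with `h_n⁻¹ ≥ Υ`, the sum over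
integers `k ≥ −ℓ_n` with `|k| ≥ Υ+1` of
`|β_{n,+} + (−1)^{ℓ_n+k} β_{n,−}|² · m_{ℓ_n+k}/(λ_{ℓ_n+k}² − h_n⁻²)²`
is at most `C h_n^{3−d}/Υ`. -/
theorem stmt_2 (d : ℕ) (hd : d = 2 ∨ d = 3)
    (h : ℕ → ℝ) (hh : ∀ n, h n ∈ Set.Ioo (0 : ℝ) 1)
    (hto : Tendsto h atTop (nhds 0))
    (L : ℕ → ℕ) (s : ℕ → ℝ) (hs : ∀ n, s n ∈ Set.Ico (0 : ℝ) 1)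
    (heq : ∀ n, (h n) ^ (-2 : ℤ) = ((L n : ℝ) + s n) * ((L n : ℝ) + s n + (d : ℝ) - 1))
    (β : ℕ → ℂ × ℂ) (hβ : ∃ M : ℝ, ∀ n, ‖β n‖ ≤ M) :
    ∃ C : ℝ, 1 < C ∧ ∀ Υ : ℕ, 1 ≤ Υ → ∀ n : ℕ, (Υ : ℝ) ≤ (h n)⁻¹ →
      Summable (fun k : {k : ℤ // -(L n : ℤ) ≤ k ∧ (Υ : ℤ) + 1 ≤ |k|} =>
        ‖(β n).1 + (-1 : ℂ) ^ ((L n : ℤ) + (k : ℤ)) * (β n).2‖ ^ 2 *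
          mult d ((L n : ℤ) + (k : ℤ)) /
            (lam2 d ((L n : ℤ) + (k : ℤ)) - (h n) ^ (-2 : ℤ)) ^ 2) ∧
      (∑' k : {k : ℤ // -(L n : ℤ) ≤ k ∧ (Υ : ℤ) + 1 ≤ |k|},
        ‖(β n).1 + (-1 : ℂ) ^ ((L n : ℤ) + (k : ℤ)) * (β n).2‖ ^ 2 *
          mult d ((L n : ℤ) + (k : ℤ)) /
            (lam2 d ((L n : ℤ) + (k : ℤ)) - (h n) ^ (-2 : ℤ)) ^ 2)
        ≤ C * (h n) ^ ((3 : ℤ) - (d : ℤ)) / (Υ : ℝ) := by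
  obtain ⟨M, hM⟩ := hβ
  obtain ⟨M', hM'def⟩ : ∃ x : ℝ, x = max M 1 := ⟨_, rfl⟩
  have hM'1 : (1:ℝ) ≤ M' := hM'def ▸ le_max_right M 1
  have hMle : ∀ m, ‖β m‖ ≤ M' := fun m => (hM m).trans (hM'def ▸ le_max_left M 1)
  refine ⟨32 * M' ^ 2 + 1, by nlinarith, ?_⟩
  intro Υ hΥ n _
  obtain ⟨hH0, hH1⟩ := hh n
  obtain ⟨hσ0, hσ1⟩ := hs n
  obtain ⟨Hp, hHpdef⟩ : ∃ x : ℝ, x = (h n) ^ ((3:ℤ) - (d:ℤ)) := ⟨_, rfl⟩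
  have hHp0 : 0 < Hp := hHpdef ▸ zpow_pos hH0 _
  have hΥ0 : (0:ℝ) < (Υ:ℝ) := by exact_mod_cast hΥ
  -- the majorant on ℤ
  obtain ⟨T, hTdef⟩ : ∃ T : ℤ → ℝ, T = fun z : ℤ => uuaux Υ z.natAbs := ⟨_, rfl⟩
  have hTnat : ∀ m : ℕ, T m = uuaux Υ m := by intro m; rw [hTdef]; simp
  have hTneg : ∀ m : ℕ, T (-(m+1)) = uuaux Υ (m+1) := by
    intro m; rw [hTdef]
    show uuaux Υ (-((m:ℤ)+1)).natAbs = uuaux Υ (m+1)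
    have e : (-((m:ℤ)+1)).natAbs = m + 1 := by omega
    rw [e]
  have hT0 : ∀ z, 0 ≤ T z := by
    intro z; rw [hTdef]; exact uuaux_nonneg Υ hΥ _
  have hTsum : Summable T := by
    apply Summable.of_nat_of_neg_add_one
    · exact ((by simpa using uuaux_summable Υ hΥ 0 : Summable fun i : ℕ => uuaux Υ i)).congr
        fun m => (hTnat m).symm
    · exact (uuaux_summable Υ hΥ 1).congr fun m => (hTneg m).symm
  have htsumT : ∑' z : ℤ, T z ≤ (Υ:ℝ)⁻¹ + (Υ:ℝ)⁻¹ := by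
    rw [tsum_of_nat_of_neg_add_one
      (((by simpa using uuaux_summable Υ hΥ 0 : Summable fun i : ℕ => uuaux Υ i)).congr
        fun m => (hTnat m).symm)
      ((uuaux_summable Υ hΥ 1).congr fun m => (hTneg m).symm)]
    have e1 : ∑' m : ℕ, T m = ∑' m : ℕ, uuaux Υ (m + 0) := by
      apply tsum_congr; intro m; rw [hTnat]; norm_num
    have e2 : ∑' m : ℕ, T (-(m+1)) = ∑' m : ℕ, uuaux Υ (m + 1) := by
      apply tsum_congr; intro m; rw [hTneg]
    have e2' : (∑' m : ℕ, T (-(↑m+1))) = ∑' m : ℕ, uuaux Υ (m + 1) := by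
      rw [← e2]
    calc (∑' m : ℕ, T m) + ∑' m : ℕ, T (-(↑m+1))
        = (∑' m : ℕ, uuaux Υ (m + 0)) + ∑' m : ℕ, uuaux Υ (m + 1) := by rw [e1, e2']
      _ ≤ (Υ:ℝ)⁻¹ + (Υ:ℝ)⁻¹ :=
          add_le_add (uuaux_tsum_le Υ hΥ 0) (uuaux_tsum_le Υ hΥ 1)
  -- per-term bound
  have key : ∀ x : {k : ℤ // -(L n : ℤ) ≤ k ∧ (Υ : ℤ) + 1 ≤ |k|},
      ‖(β n).1 + (-1 : ℂ) ^ ((L n : ℤ) + (x : ℤ)) * (β n).2‖ ^ 2 *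
          mult d ((L n : ℤ) + (x : ℤ)) /
            (lam2 d ((L n : ℤ) + (x : ℤ)) - (h n) ^ (-2 : ℤ)) ^ 2
        ≤ (16 * M' ^ 2 * Hp) * T (x : ℤ) := by
    rintro ⟨k, hk1, hk2⟩
    have hl : 0 ≤ (L n : ℤ) + k := by linarith
    have hlk : (((L n : ℤ) + k : ℤ) : ℝ) = (L n : ℝ) + (k : ℝ) := by push_cast; ring
    have hnab : Υ + 1 ≤ k.natAbs := by
      rw [Int.abs_eq_natAbs] at hk2; exact_mod_cast hk2
    have hjr : ((k.natAbs : ℕ) : ℝ) = |(k:ℝ)| := by push_cast [Nat.cast_natAbs]; norm_num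
    have hjr2 : (2:ℝ) ≤ ((k.natAbs : ℕ) : ℝ) := by exact_mod_cast (by omega : 2 ≤ k.natAbs)
    have hb : (0:ℝ) ≤ ‖(β n).1 + (-1 : ℂ) ^ ((L n : ℤ) + k) * (β n).2‖ ^ 2 := by positivity
    have hkey := key_term d hd (h n) hH0 (L n : ℝ) (s n) (Nat.cast_nonneg _) hσ0 hσ1
      (heq n) _ hb ((L n : ℤ) + k) k hlk hl ((k.natAbs : ℕ) : ℝ) hjr hjr2
    have hTk : T k = (((k.natAbs : ℕ) : ℝ) - 1)⁻¹ - ((k.natAbs : ℕ) : ℝ)⁻¹ := by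
      rw [hTdef]; simp only [uuaux, if_pos hnab]
    have hTk0 : 0 ≤ T k := hT0 k
    -- numerator bound
    have hn1 : ‖(β n).1‖ ≤ M' := (norm_fst_le _).trans (hMle n)
    have hn2 : ‖(β n).2‖ ≤ M' := (norm_snd_le _).trans (hMle n)
    have hnorm : ‖(β n).1 + (-1 : ℂ) ^ ((L n : ℤ) + k) * (β n).2‖ ≤ 2 * M' := by
      calc ‖(β n).1 + (-1 : ℂ) ^ ((L n : ℤ) + k) * (β n).2‖
          ≤ ‖(β n).1‖ + ‖(-1 : ℂ) ^ ((L n : ℤ) + k) * (β n).2‖ := norm_add_le _ _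
        _ = ‖(β n).1‖ + ‖(β n).2‖ := by rw [norm_mul, norm_zpow]; simp
        _ ≤ 2 * M' := by linarith
    have hN2 : ‖(β n).1 + (-1 : ℂ) ^ ((L n : ℤ) + k) * (β n).2‖ ^ 2 ≤ 4 * M' ^ 2 := by
      have := pow_le_pow_left₀ (norm_nonneg _) hnorm 2
      nlinarith
    rw [← hHpdef] at hkey
    calc ‖(β n).1 + (-1 : ℂ) ^ ((L n : ℤ) + k) * (β n).2‖ ^ 2 *
          mult d ((L n : ℤ) + k) / (lam2 d ((L n : ℤ) + k) - (h n) ^ (-2 : ℤ)) ^ 2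
        ≤ 4 * (‖(β n).1 + (-1 : ℂ) ^ ((L n : ℤ) + k) * (β n).2‖ ^ 2) * Hp *
            ((((k.natAbs : ℕ) : ℝ) - 1)⁻¹ - ((k.natAbs : ℕ) : ℝ)⁻¹) := hkey
      _ = 4 * (‖(β n).1 + (-1 : ℂ) ^ ((L n : ℤ) + k) * (β n).2‖ ^ 2) * Hp * T k := by
          rw [hTk]
      _ ≤ (16 * M' ^ 2 * Hp) * T k := by
          have h4 : 4 * (‖(β n).1 + (-1 : ℂ) ^ ((L n : ℤ) + k) * (β n).2‖ ^ 2) * Hp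
              ≤ 16 * M' ^ 2 * Hp := by nlinarith
          exact mul_le_mul_of_nonneg_right h4 hTk0
  have hf0 : ∀ x : {k : ℤ // -(L n : ℤ) ≤ k ∧ (Υ : ℤ) + 1 ≤ |k|},
      0 ≤ ‖(β n).1 + (-1 : ℂ) ^ ((L n : ℤ) + (x : ℤ)) * (β n).2‖ ^ 2 *
          mult d ((L n : ℤ) + (x : ℤ)) /
            (lam2 d ((L n : ℤ) + (x : ℤ)) - (h n) ^ (-2 : ℤ)) ^ 2 := by
    rintro ⟨k, hk1, hk2⟩
    have hl : 0 ≤ (L n : ℤ) + k := by linarith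
    exact div_nonneg (mul_nonneg (by positivity) (mult_nonneg' d _ hl)) (sq_nonneg _)
  have hKT : Summable (fun x : {k : ℤ // -(L n : ℤ) ≤ k ∧ (Υ : ℤ) + 1 ≤ |k|} =>
      (16 * M' ^ 2 * Hp) * T (x : ℤ)) :=
    (hTsum.mul_left _).comp_injective Subtype.val_injective
  have hfsum : Summable (fun k : {k : ℤ // -(L n : ℤ) ≤ k ∧ (Υ : ℤ) + 1 ≤ |k|} =>
      ‖(β n).1 + (-1 : ℂ) ^ ((L n : ℤ) + (k : ℤ)) * (β n).2‖ ^ 2 *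
        mult d ((L n : ℤ) + (k : ℤ)) /
          (lam2 d ((L n : ℤ) + (k : ℤ)) - (h n) ^ (-2 : ℤ)) ^ 2) :=
    Summable.of_nonneg_of_le hf0 key hKT
  refine ⟨hfsum, ?_⟩
  have hsub : (∑' x : {k : ℤ // -(L n : ℤ) ≤ k ∧ (Υ : ℤ) + 1 ≤ |k|}, T (x : ℤ))
      ≤ ∑' z : ℤ, T z :=
    Summable.tsum_le_tsum_of_inj Subtype.val Subtype.val_injective (fun c _ => hT0 c)
      (fun _ => le_rfl) (hTsum.comp_injective Subtype.val_injective) hTsum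
  have hTsubsum : Summable (fun x : {k : ℤ // -(L n : ℤ) ≤ k ∧ (Υ : ℤ) + 1 ≤ |k|} =>
      T (x : ℤ)) := hTsum.comp_injective Subtype.val_injective
  calc (∑' k : {k : ℤ // -(L n : ℤ) ≤ k ∧ (Υ : ℤ) + 1 ≤ |k|},
        ‖(β n).1 + (-1 : ℂ) ^ ((L n : ℤ) + (k : ℤ)) * (β n).2‖ ^ 2 *
          mult d ((L n : ℤ) + (k : ℤ)) /
            (lam2 d ((L n : ℤ) + (k : ℤ)) - (h n) ^ (-2 : ℤ)) ^ 2)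
      ≤ ∑' x : {k : ℤ // -(L n : ℤ) ≤ k ∧ (Υ : ℤ) + 1 ≤ |k|},
          (16 * M' ^ 2 * Hp) * T (x : ℤ) := Summable.tsum_le_tsum key hfsum hKT
    _ = (16 * M' ^ 2 * Hp) * ∑' x : {k : ℤ // -(L n : ℤ) ≤ k ∧ (Υ : ℤ) + 1 ≤ |k|},
          T (x : ℤ) := tsum_mul_left
    _ ≤ (16 * M' ^ 2 * Hp) * ((Υ:ℝ)⁻¹ + (Υ:ℝ)⁻¹) := by
        apply mul_le_mul_of_nonneg_left ?_ (by positivity)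
        linarith
    _ ≤ (32 * M' ^ 2 + 1) * (h n) ^ ((3 : ℤ) - (d : ℤ)) / (Υ : ℝ) := by
        rw [← hHpdef, div_eq_mul_inv]
        have hinv : (0:ℝ) ≤ (Υ:ℝ)⁻¹ := by positivity
        nlinarith [mul_nonneg hHp0.le hinv]
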